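/- Let I = {1,…,m}, let 0 = k₀ < k₁ < … < k_p = m, and let S = {φ_1,…,φ_m} be injective contractions of ℝ^d such that φ_j = φ_{k_i} whenever k_{i−1} < j ≤ k_i (for 1 ≤ i ≤ p), and such that the images φ_{k_1}(Λ), …, φ_{k_p}(Λ) of the limit set Λ are pairwise disjoint. Then for every ω ∈ Σ_I⁺ and every n ≥ 1, β_n(π(ω)) = Π_{s=1}^n w(ω_s), where w(j) = k_i − k_{i−1} for the unique index i with k_{i−1} < j ≤ k_i. -/

import Mathlib

open MeasureTheory Filter

noncomputable section

/-- Composition `φ_{η 0} ∘ φ_{η 1} ∘ … ∘ φ_{η (n-1)}` of the maps of an iterated function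
system along a finite word `η`. -/
def comps {α E : Type*} (φ : α → E → E) {n : ℕ} (η : Fin n → α) : E → E :=
  (List.ofFn fun k => φ (η k)).foldr (· ∘ ·) id

/-- `β_n(x)`: the number of words `(η_1,…,η_n) ∈ I^n` with
`x ∈ φ_{η_1}∘…∘φ_{η_n}(Λ)`. -/
def ifsBeta {m : ℕ} {E : Type*} (φ : Fin m → E → E) (Λ : Set E) (n : ℕ) (x : E) : ℕ :=
  Set.ncard {η : Fin n → Fin m | x ∈ comps φ η '' Λ}

/-- `μ` is the uniform Bernoulli measure on `I^ℕ` (`|I| = m`): every cylinder of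
length `n` has measure `(1/m)^n`. This is the measure of maximal entropy for the shift. -/
def IsUniformBernoulli (m : ℕ) (μ : Measure (ℕ → Fin m)) : Prop :=
  ∀ (n : ℕ) (η : Fin n → Fin m),
    μ {ω | ∀ k : Fin n, ω (k : ℕ) = η k} = (1 / (m : ENNReal)) ^ n

/-- The system `{φ_i, i ∈ I}` consists of injective contractions, with nonempty compact
limit set `Λ = ⋃_i φ_i(Λ)`, and `π` is the canonical (continuous) coding map onto `Λ`. -/
structure IsIFSSetup {m d : ℕ} (φ : Fin m → EuclideanSpace ℝ (Fin d) → EuclideanSpace ℝ (Fin d))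
    (Λ : Set (EuclideanSpace ℝ (Fin d))) (π : (ℕ → Fin m) → EuclideanSpace ℝ (Fin d)) : Prop where
  inj : ∀ i, Function.Injective (φ i)
  contr : ∀ i, ∃ r : NNReal, r < 1 ∧ LipschitzWith r (φ i)
  compact : IsCompact Λ
  nonempty : Λ.Nonempty
  selfSimilar : Λ = ⋃ i, φ i '' Λ
  pi_continuous : Continuous π
  pi_mem : ∀ ω, π ω ∈ Λ
  pi_eq : ∀ ω, π ω = φ (ω 0) (π fun k => ω (k + 1))

theorem comps_zero' {α E : Type*} (φ : α → E → E) (η : Fin 0 → α) : comps φ η = id := by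
  simp [comps]

theorem comps_succ' {α E : Type*} (φ : α → E → E) {n : ℕ} (η : Fin (n + 1) → α) :
    comps φ η = φ (η 0) ∘ comps φ (Fin.tail η) := by
  simp [comps, List.ofFn_succ, Fin.tail]

theorem ncard_prod' {α β : Type*} (s : Set α) (t : Set β) :
    (s ×ˢ t).ncard = s.ncard * t.ncard := by
  rw [← Nat.card_coe_set_eq, ← Nat.card_coe_set_eq, ← Nat.card_coe_set_eq,
    Nat.card_congr (Equiv.Set.prod s t), Nat.card_prod]

/-- In the exact-overlap block setting, for every `ω` and every `n ≥ 1`,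
`β_n(π ω) = Π_{s=1}^n w(ω_s)` where `w(j)` is the size of the block containing `j`. -/
theorem beta_eq_prod_block_sizes {m d p : ℕ}
    (φ : Fin m → EuclideanSpace ℝ (Fin d) → EuclideanSpace ℝ (Fin d))
    (Λ : Set (EuclideanSpace ℝ (Fin d))) (π : (ℕ → Fin m) → EuclideanSpace ℝ (Fin d))
    (hS : IsIFSSetup φ Λ π)
    (k : Fin (p + 1) → ℕ) (hk0 : k 0 = 0) (hkm : k (Fin.last p) = m) (hkmono : StrictMono k)
    (hblock : ∀ i : Fin p, ∀ j j' : Fin m,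
      k i.castSucc ≤ (j : ℕ) → (j : ℕ) < k i.succ →
      k i.castSucc ≤ (j' : ℕ) → (j' : ℕ) < k i.succ → φ j = φ j')
    (hdisj : ∀ i i' : Fin p, i ≠ i' → ∀ j j' : Fin m,
      k i.castSucc ≤ (j : ℕ) → (j : ℕ) < k i.succ →
      k i'.castSucc ≤ (j' : ℕ) → (j' : ℕ) < k i'.succ →
      Disjoint (φ j '' Λ) (φ j' '' Λ))
    (w : Fin m → ℕ)
    (hw : ∀ i : Fin p, ∀ j : Fin m,
      k i.castSucc ≤ (j : ℕ) → (j : ℕ) < k i.succ → w j = k i.succ - k i.castSucc) :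
    ∀ (ω : ℕ → Fin m) (n : ℕ), 1 ≤ n →
      ifsBeta φ Λ n (π ω) = ∏ s : Fin n, w (ω (s : ℕ)) := by
  have hmono : Monotone k := hkmono.monotone
  -- φ i '' Λ ⊆ Λ
  have hsub : ∀ j : Fin m, φ j '' Λ ⊆ Λ := by
    intro j
    conv_rhs => rw [hS.selfSimilar]
    exact Set.subset_iUnion (fun i => φ i '' Λ) j
  -- comps images stay in Λ
  have hcomps_sub : ∀ (n : ℕ) (η : Fin n → Fin m), comps φ η '' Λ ⊆ Λ := by
    intro n
    induction n with
    | zero => intro η; rw [comps_zero']; simp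
    | succ n IH =>
      intro η
      rw [comps_succ', Set.image_comp]
      exact (Set.image_mono (f := _) (IH _)).trans (hsub _)
  -- every index lies in some block
  have hblkex : ∀ j : Fin m, ∃ i : Fin p, k i.castSucc ≤ (j : ℕ) ∧ (j : ℕ) < k i.succ := by
    intro j
    have hm : 0 < m := j.pos
    have hp : 0 < p := by
      rcases Nat.eq_zero_or_pos p with h | h
      · subst h
        have h1 : (Fin.last 0) = (0 : Fin 1) := rfl
        rw [h1, hk0] at hkm
        omega
      · exact h
    classical
    set T : Finset (Fin p) := Finset.univ.filter (fun i => k i.castSucc ≤ (j : ℕ)) with hT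
    have hTne : T.Nonempty := by
      refine ⟨⟨0, hp⟩, ?_⟩
      have h0 : ((⟨0, hp⟩ : Fin p).castSucc) = (0 : Fin (p + 1)) := rfl
      simp only [hT, Finset.mem_filter, Finset.mem_univ, true_and, h0, hk0]
      exact Nat.zero_le _
    set i := T.max' hTne with hi
    have hile : k i.castSucc ≤ (j : ℕ) := by
      have := T.max'_mem hTne
      simp only [hT, Finset.mem_filter, Finset.mem_univ, true_and] at this
      exact this
    refine ⟨i, hile, ?_⟩
    by_contra hge
    push_neg at hge
    rcases lt_or_eq_of_le (Nat.succ_le_of_lt i.isLt) with h | h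
    · have hcs : ((⟨(i : ℕ) + 1, h⟩ : Fin p).castSucc) = i.succ := rfl
      have hmem : (⟨(i : ℕ) + 1, h⟩ : Fin p) ∈ T := by
        simp only [hT, Finset.mem_filter, Finset.mem_univ, true_and, hcs]
        exact hge
      have hle := T.le_max' _ hmem
      rw [← hi] at hle
      simp only [Fin.le_def] at hle
      omega
    · have hlast : i.succ = Fin.last p := by
        ext
        simp only [Fin.val_succ, Fin.val_last]
        omega
      rw [hlast, hkm] at hge
      exact absurd j.isLt (not_lt.mpr hge)
  -- uniqueness of blocks
  have huniq : ∀ (i i' : Fin p) (x : ℕ), k i.castSucc ≤ x → x < k i.succ →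
      k i'.castSucc ≤ x → x < k i'.succ → i = i' := by
    intro i i' x h1 h2 h3 h4
    by_contra hne
    rcases lt_or_gt_of_ne hne with h | h
    · have hle : i.succ ≤ i'.castSucc := by
        simp only [Fin.le_def, Fin.val_succ, Fin.coe_castSucc]
        exact h
      have := hmono hle
      omega
    · have hle : i'.succ ≤ i.castSucc := by
        simp only [Fin.le_def, Fin.val_succ, Fin.coe_castSucc]
        exact h
      have := hmono hle
      omega
  -- membership in a single image is equivalent to being in the block of ω 0
  have hmem1 : ∀ (ω : ℕ → Fin m) (j : Fin m) (i : Fin p),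
      k i.castSucc ≤ ((ω 0 : ℕ)) → ((ω 0 : ℕ)) < k i.succ →
      (π ω ∈ φ j '' Λ ↔ (k i.castSucc ≤ (j : ℕ) ∧ (j : ℕ) < k i.succ)) := by
    intro ω j i h1 h2
    constructor
    · intro hmem
      obtain ⟨i', hj1, hj2⟩ := hblkex j
      have hii : i' = i := by
        by_contra hne
        have hd := hdisj i' i hne j (ω 0) hj1 hj2 h1 h2
        have hπ : π ω ∈ φ (ω 0) '' Λ := by
          rw [hS.pi_eq ω]
          exact Set.mem_image_of_mem _ (hS.pi_mem _)
        exact Set.disjoint_left.mp hd hmem hπ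
      subst hii
      exact ⟨hj1, hj2⟩
    · rintro ⟨hj1, hj2⟩
      have hφ : φ j = φ (ω 0) := hblock i j (ω 0) hj1 hj2 h1 h2
      rw [hφ, hS.pi_eq ω]
      exact Set.mem_image_of_mem _ (hS.pi_mem _)
  -- peeling off the first letter
  have hpeel : ∀ (ω : ℕ → Fin m) (n : ℕ) (η : Fin (n + 1) → Fin m) (i : Fin p),
      k i.castSucc ≤ ((ω 0 : ℕ)) → ((ω 0 : ℕ)) < k i.succ →
      (π ω ∈ comps φ η '' Λ ↔
        ((k i.castSucc ≤ (η 0 : ℕ) ∧ (η 0 : ℕ) < k i.succ) ∧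
          π (fun t => ω (t + 1)) ∈ comps φ (Fin.tail η) '' Λ)) := by
    intro ω n η i h1 h2
    rw [comps_succ', Set.image_comp]
    constructor
    · rintro ⟨z, hz, hzeq⟩
      have hzΛ : z ∈ Λ := hcomps_sub _ _ hz
      have hmemφ : π ω ∈ φ (η 0) '' Λ := ⟨z, hzΛ, hzeq⟩
      have hbd := (hmem1 ω (η 0) i h1 h2).mp hmemφ
      have hφeq : φ (η 0) = φ (ω 0) := hblock i (η 0) (ω 0) hbd.1 hbd.2 h1 h2
      refine ⟨hbd, ?_⟩
      have heq : φ (ω 0) (π fun t => ω (t + 1)) = φ (ω 0) z := by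
        rw [← hS.pi_eq, ← hzeq, hφeq]
      have := hS.inj (ω 0) heq
      rw [this]
      exact hz
    · rintro ⟨⟨hb1, hb2⟩, hz⟩
      have hφeq : φ (η 0) = φ (ω 0) := hblock i (η 0) (ω 0) hb1 hb2 h1 h2
      exact ⟨π (fun t => ω (t + 1)), hz, by rw [hφeq, ← hS.pi_eq]⟩
  -- main induction
  have key : ∀ (n : ℕ) (ω : ℕ → Fin m),
      ifsBeta φ Λ n (π ω) = ∏ s : Fin n, w (ω (s : ℕ)) := by
    intro n
    induction n with
    | zero =>
      intro ω
      have hs : {η : Fin 0 → Fin m | π ω ∈ comps φ η '' Λ} = Set.univ := by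
        ext η
        simp [comps_zero', hS.pi_mem]
      rw [ifsBeta, hs, Set.ncard_univ]
      simp [Nat.card_eq_fintype_card]
    | succ n IH =>
      intro ω
      obtain ⟨i, h1, h2⟩ := hblkex (ω 0)
      have hinj : Function.Injective
          (fun q : Fin m × (Fin n → Fin m) => Fin.cons q.1 q.2 : _ → Fin (n + 1) → Fin m) := by
        rintro ⟨a, f⟩ ⟨b, g⟩ h
        obtain ⟨h1, h2⟩ := Fin.cons_injective2 h
        exact Prod.ext h1 h2
      have hset : {η : Fin (n + 1) → Fin m | π ω ∈ comps φ η '' Λ}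
          = (fun q : Fin m × (Fin n → Fin m) => Fin.cons q.1 q.2) ''
            (({j : Fin m | k i.castSucc ≤ (j : ℕ) ∧ (j : ℕ) < k i.succ}) ×ˢ
             {η' : Fin n → Fin m | π (fun t => ω (t + 1)) ∈ comps φ η' '' Λ}) := by
        ext η
        constructor
        · intro hη
          obtain ⟨hb, ht⟩ := (hpeel ω n η i h1 h2).mp hη
          exact ⟨(η 0, Fin.tail η), ⟨hb, ht⟩, Fin.cons_self_tail η⟩
        · rintro ⟨⟨j, η'⟩, ⟨hb, ht⟩, hce⟩
          refine (hpeel ω n η i h1 h2).mpr ?_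
          subst hce
          exact ⟨by simpa using hb, by simpa [Fin.tail_cons] using ht⟩
      have hbm : k i.succ ≤ m := hkm ▸ hmono (Fin.le_last _)
      have hB : {j : Fin m | k i.castSucc ≤ (j : ℕ) ∧ (j : ℕ) < k i.succ}.ncard = w (ω 0) := by
        rw [hw i (ω 0) h1 h2]
        have himg : Fin.val '' {j : Fin m | k i.castSucc ≤ (j : ℕ) ∧ (j : ℕ) < k i.succ}
            = Set.Ico (k i.castSucc) (k i.succ) := by
          ext x
          simp only [Set.mem_image, Set.mem_setOf_eq, Set.mem_Ico]
          constructor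
          · rintro ⟨j, ⟨ha, hb⟩, rfl⟩; exact ⟨ha, hb⟩
          · rintro ⟨ha, hb⟩; exact ⟨⟨x, lt_of_lt_of_le hb hbm⟩, ⟨ha, hb⟩, rfl⟩
        calc {j : Fin m | k i.castSucc ≤ (j : ℕ) ∧ (j : ℕ) < k i.succ}.ncard
            = (Fin.val '' {j : Fin m | k i.castSucc ≤ (j : ℕ) ∧ (j : ℕ) < k i.succ}).ncard :=
              (Set.ncard_image_of_injective _ Fin.val_injective).symm
          _ = (Set.Ico (k i.castSucc) (k i.succ)).ncard := by rw [himg]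
          _ = k i.succ - k i.castSucc := by
              rw [← Finset.coe_Ico, Set.ncard_coe_finset, Nat.card_Ico]
      have htail : {η' : Fin n → Fin m | π (fun t => ω (t + 1)) ∈ comps φ η' '' Λ}.ncard
          = ifsBeta φ Λ n (π (fun t => ω (t + 1))) := rfl
      rw [ifsBeta, hset, Set.ncard_image_of_injective _ hinj, ncard_prod', hB, htail,
        IH (fun t => ω (t + 1)), Fin.prod_univ_succ]
      simp [Fin.val_succ]
  intro ω n _
  exact key n ω

end
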